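/- Let λ = a + ib ∈ ℂ with a < 0. Define φ : ℂ → ℂ by φ(0) = 0 and φ(ρ e^{iθ}) = exp(−(1/a + i b/a) log ρ) · e^{iθ} for ρ > 0. Then φ is a homeomorphism of ℂ onto itself satisfying φ(e^{λ t} w) = e^{−t} φ(w) for all t ∈ ℝ and w ∈ ℂ. -/

import Mathlib

open Complex

noncomputable def gmap (c : ℂ) (w : ℂ) : ℂ :=
  Complex.exp (c * (Real.log (‖w‖) : ℂ)) * (w / (‖w‖ : ℂ))

lemma gmap_zero (c : ℂ) : gmap c 0 = 0 := by simp [gmap]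

lemma abs_gmap (c : ℂ) {w : ℂ} (hw : w ≠ 0) :
    ‖gmap c w‖ = (‖w‖) ^ c.re := by
  have hr : (0:ℝ) < ‖w‖ := norm_pos_iff.mpr hw
  have h1 : ‖w / (‖w‖ : ℂ)‖ = 1 := by
    rw [norm_div, Complex.norm_real, Real.norm_of_nonneg hr.le, div_self hr.ne']
  rw [gmap, norm_mul, h1, mul_one, Complex.norm_exp, Real.rpow_def_of_pos hr]
  congr 1
  simp [Complex.mul_re]
  ring

lemma abs_gmap' {c : ℂ} (hc : c.re ≠ 0) (w : ℂ) :
    ‖gmap c w‖ = (‖w‖) ^ c.re := by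
  rcases eq_or_ne w 0 with rfl | hw
  · simp [gmap_zero, Real.zero_rpow hc]
  · exact abs_gmap c hw

lemma gmap_one (w : ℂ) : gmap 1 w = w := by
  rcases eq_or_ne w 0 with rfl | hw
  · simp [gmap]
  · have hr : (0:ℝ) < ‖w‖ := norm_pos_iff.mpr hw
    have : Complex.exp ((Real.log (‖w‖) : ℂ)) = (‖w‖ : ℂ) := by
      rw [← Complex.ofReal_exp, Real.exp_log hr]
    rw [gmap, one_mul, this, mul_div_cancel₀]
    simpa using hr.ne'

lemma gmap_gmap (c c' : ℂ) {w : ℂ} (hw : w ≠ 0) :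
    gmap c (gmap c' w) = gmap (c * c'.re + Complex.I * c'.im) w := by
  have hr : (0:ℝ) < ‖w‖ := norm_pos_iff.mpr hw
  set L : ℝ := Real.log (‖w‖) with hL
  have habs : ‖gmap c' w‖ = (‖w‖) ^ c'.re := abs_gmap c' hw
  have hlog : Real.log (‖gmap c' w‖) = c'.re * L := by
    rw [habs, Real.log_rpow hr]
  have habsC : (‖gmap c' w‖ : ℂ) = Complex.exp ((c'.re : ℂ) * L) := by
    rw [habs, Real.rpow_def_of_pos hr, ← hL, Complex.ofReal_exp, Complex.ofReal_mul]
    rw [mul_comm]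
  rw [gmap, hlog, habsC, gmap, ← hL, gmap, ← hL]
  have hz : (‖w‖ : ℂ) ≠ 0 := by simpa using hr.ne'
  have hdiv : Complex.exp (c' * (L:ℂ)) / Complex.exp ((c'.re:ℂ) * L) =
      Complex.exp (Complex.I * c'.im * L) := by
    rw [← Complex.exp_sub]
    congr 1
    linear_combination (-(L:ℂ)) * Complex.re_add_im c'
  rw [mul_div_right_comm, hdiv, ← mul_assoc, ← Complex.exp_add]
  congr 2
  push_cast
  ring

lemma continuous_gmap {c : ℂ} (hc : 0 < c.re) : Continuous (gmap c) := by
  rw [continuous_iff_continuousAt]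
  intro w
  rcases eq_or_ne w 0 with rfl | hw
  · rw [ContinuousAt, gmap_zero]
    rw [tendsto_zero_iff_norm_tendsto_zero]
    have heq : ∀ z : ℂ, ‖gmap c z‖ = ‖z‖ ^ c.re := fun z => by
      rw [abs_gmap' hc.ne' z]
    simp_rw [heq]
    have h0 : Filter.Tendsto (fun z : ℂ => ‖z‖) (nhds 0) (nhds 0) := by
      simpa using (continuous_norm (E := ℂ)).tendsto 0
    have h1 : Filter.Tendsto (fun x : ℝ => x ^ c.re) (nhds 0) (nhds (0 ^ c.re)) :=
      (Real.continuousAt_rpow_const 0 c.re (Or.inr hc.le)).tendsto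
    rw [Real.zero_rpow hc.ne'] at h1
    exact h1.comp h0
  · have habs : ContinuousAt (fun z : ℂ => ((‖z‖ : ℝ) : ℂ)) w :=
      Complex.continuous_ofReal.continuousAt.comp continuous_norm.continuousAt
    have h1 : ContinuousAt (fun z : ℂ => ((Real.log (‖z‖) : ℝ) : ℂ)) w :=
      Complex.continuous_ofReal.continuousAt.comp
        ((Real.continuousAt_log (norm_ne_zero_iff.mpr hw)).comp
          continuous_norm.continuousAt)
    have h2 : ContinuousAt (fun z : ℂ =>
        Complex.exp (c * ((Real.log (‖z‖) : ℝ) : ℂ))) w :=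
      Complex.continuous_exp.continuousAt.comp (continuousAt_const.mul h1)
    have h3 : ContinuousAt (fun z : ℂ => z / ((‖z‖ : ℝ) : ℂ)) w :=
      continuousAt_id.div habs (by simpa using norm_ne_zero_iff.mpr hw)
    exact h2.mul h3

theorem stmt1 (a b : ℝ) (ha : a < 0)
    (φ : ℂ → ℂ) (hφ0 : φ 0 = 0)
    (hφ : ∀ w : ℂ, w ≠ 0 →
      φ w = Complex.exp (-((1 / a : ℂ) + Complex.I * (b / a)) * (Real.log (‖w‖) : ℂ))
        * (w / (‖w‖ : ℂ))) :
    IsHomeomorph φ ∧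
      ∀ (t : ℝ) (w : ℂ),
        φ (Complex.exp ((a + b * Complex.I) * t) * w) = Complex.exp (-(t : ℂ)) * φ w := by
  have ha0 : a ≠ 0 := ha.ne
  have ha' : (a : ℂ) ≠ 0 := by exact_mod_cast ha0
  set c : ℂ := -((1 / a : ℂ) + Complex.I * (b / a)) with hc
  set c' : ℂ := -(a : ℂ) - Complex.I * b with hc'
  have hceq : c = ((-(1/a) : ℝ) : ℂ) + ((-(b/a) : ℝ) : ℂ) * Complex.I := by
    rw [hc]; push_cast; ring
  have hc'eq : c' = ((-a : ℝ) : ℂ) + ((-b : ℝ) : ℂ) * Complex.I := by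
    rw [hc']; push_cast; ring
  have hcre : c.re = -(1/a) := by rw [hceq]; simp
  have hcim : c.im = -(b/a) := by rw [hceq]; simp
  have hc're : c'.re = -a := by rw [hc'eq]; simp
  have hc'im : c'.im = -b := by rw [hc'eq]; simp
  have hφg : φ = gmap c := by
    funext w
    rcases eq_or_ne w 0 with rfl | hw
    · rw [hφ0, gmap_zero]
    · rw [hφ w hw]; rfl
  have hcc' : c * (c'.re : ℂ) + Complex.I * (c'.im : ℂ) = 1 := by
    rw [hc're, hc'im, hc]; push_cast; field_simp; ring
  have hc'c : c' * (c.re : ℂ) + Complex.I * (c.im : ℂ) = 1 := by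
    rw [hcre, hcim, hc']; push_cast; field_simp; ring
  have hinv1 : Function.LeftInverse (gmap c') (gmap c) := by
    intro w
    rcases eq_or_ne w 0 with rfl | hw
    · simp [gmap_zero]
    · rw [gmap_gmap c' c hw, hc'c, gmap_one]
  have hinv2 : Function.RightInverse (gmap c') (gmap c) := by
    intro w
    rcases eq_or_ne w 0 with rfl | hw
    · simp [gmap_zero]
    · rw [gmap_gmap c c' hw, hcc', gmap_one]
  have hcrepos : 0 < c.re := by
    rw [hcre]
    have : 1/a < 0 := div_neg_of_pos_of_neg one_pos ha
    linarith
  have hc'repos : 0 < c'.re := by rw [hc're]; linarith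
  constructor
  · rw [hφg]
    exact (Homeomorph.mk ⟨gmap c, gmap c', hinv1, hinv2⟩
      (continuous_gmap hcrepos) (continuous_gmap hc'repos)).isHomeomorph
  · intro t w
    rcases eq_or_ne w 0 with rfl | hw
    · rw [mul_zero, hφ0, mul_zero]
    · have hwabs : ‖w‖ ≠ 0 := norm_ne_zero_iff.mpr hw
      have hwabsC : ((‖w‖ : ℝ) : ℂ) ≠ 0 := by simpa using hwabs
      set L : ℝ := Real.log (‖w‖) with hLdef
      set u : ℂ := Complex.exp ((↑a + ↑b * Complex.I) * ↑t) * w with hu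
      have habsu : ‖u‖ = Real.exp (a*t) * ‖w‖ := by
        rw [hu, norm_mul, Complex.norm_exp]
        congr 2
        simp [Complex.mul_re]
      have hlogu : Real.log (‖u‖) = a*t + L := by
        rw [habsu, Real.log_mul (Real.exp_ne_zero _) hwabs, Real.log_exp, hLdef]
      rw [hφg]
      simp only [gmap]
      rw [hlogu, habsu, ← hLdef]
      have hA : u / ((Real.exp (a*t) * ‖w‖ : ℝ) : ℂ)
          = Complex.exp (((b*t : ℝ) : ℂ) * Complex.I) * (w / (‖w‖ : ℂ)) := by
        have h1 : ((Real.exp (a*t) : ℝ) : ℂ) = Complex.exp ((a*t : ℝ) : ℂ) :=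
          Complex.ofReal_exp _
        have hsplit : Complex.exp ((↑a + ↑b * Complex.I) * ↑t)
            = Complex.exp ((a*t : ℝ) : ℂ) * Complex.exp (((b*t : ℝ) : ℂ) * Complex.I) := by
          rw [← Complex.exp_add]; congr 1; push_cast; ring
        rw [hu, hsplit, show ((Real.exp (a*t) * ‖w‖ : ℝ) : ℂ)
            = ((Real.exp (a*t) : ℝ) : ℂ) * ((‖w‖ : ℝ) : ℂ) from Complex.ofReal_mul _ _, h1]
        field_simp [Complex.exp_ne_zero]
      have hB : Complex.exp (c * ((a*t + L : ℝ) : ℂ))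
          = Complex.exp (-(t:ℂ)) * Complex.exp (-(((b*t : ℝ) : ℂ)) * Complex.I)
            * Complex.exp (c * (L : ℂ)) := by
        rw [← Complex.exp_add, ← Complex.exp_add]
        congr 1
        rw [hc]; push_cast; field_simp; ring
      rw [hA, hB]
      have hbt : Complex.exp (-(((b*t : ℝ) : ℂ)) * Complex.I)
          * Complex.exp (((b*t : ℝ) : ℂ) * Complex.I) = 1 := by
        rw [← Complex.exp_add]
        ring_nf
        exact Complex.exp_zero
      linear_combination (Complex.exp (-(t:ℂ)) * Complex.exp (c * (L : ℂ))
        * (w / (‖w‖ : ℂ))) * hbt
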